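/- Let X be a countable set and let 1 ≤ p < ∞ with p ≠ 2. For every surjective linear isometry U of the complex Banach space ℓ_p(X) there exist a unique permutation σ of X and a unique function h: X → S¹ such that (Uf)(x) = h(x) f(σ(x)) for all f ∈ ℓ_p(X) and all x ∈ X. -/

import Mathlib

open scoped ENNReal Pointwise
open Filter MeasureTheory

noncomputable section

namespace BanachLampertiAux

lemma rpow_strict_sub {t x y : ℝ} (ht0 : 0 < t) (ht1 : t < 1) (hx : 0 < x) (hy : 0 < y) :
    (x + y) ^ t < x ^ t + y ^ t := by
  have hs : 0 < x + y := by linarith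
  have hxs : x / (x + y) < 1 := by rw [div_lt_one hs]; linarith
  have hys : y / (x + y) < 1 := by rw [div_lt_one hs]; linarith
  have h1 : x / (x + y) < (x / (x + y)) ^ t := by
    simpa using Real.rpow_lt_rpow_of_exponent_gt (div_pos hx hs) hxs ht1
  have h2 : y / (x + y) < (y / (x + y)) ^ t := by
    simpa using Real.rpow_lt_rpow_of_exponent_gt (div_pos hy hs) hys ht1
  have hst : (0:ℝ) < (x + y) ^ t := Real.rpow_pos_of_pos hs t
  have hsum : x / (x + y) + y / (x + y) = 1 := by field_simp
  calc (x + y) ^ t = (x / (x + y) + y / (x + y)) * (x + y) ^ t := by rw [hsum, one_mul]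
    _ < ((x / (x + y)) ^ t + (y / (x + y)) ^ t) * (x + y) ^ t := by
        apply mul_lt_mul_of_pos_right _ hst
        linarith
    _ = x ^ t + y ^ t := by
        rw [add_mul, ← Real.mul_rpow (div_nonneg hx.le hs.le) hs.le,
          ← Real.mul_rpow (div_nonneg hy.le hs.le) hs.le,
          div_mul_cancel₀ _ hs.ne', div_mul_cancel₀ _ hs.ne']

lemma rpow_strict_super {t x y : ℝ} (ht1 : 1 < t) (hx : 0 < x) (hy : 0 < y) :
    x ^ t + y ^ t < (x + y) ^ t := by
  have hs : 0 < x + y := by linarith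
  have hxs : x / (x + y) < 1 := by rw [div_lt_one hs]; linarith
  have hys : y / (x + y) < 1 := by rw [div_lt_one hs]; linarith
  have h1 : (x / (x + y)) ^ t < x / (x + y) := by
    simpa using Real.rpow_lt_rpow_of_exponent_gt (div_pos hx hs) hxs ht1
  have h2 : (y / (x + y)) ^ t < y / (x + y) := by
    simpa using Real.rpow_lt_rpow_of_exponent_gt (div_pos hy hs) hys ht1
  have hst : (0:ℝ) < (x + y) ^ t := Real.rpow_pos_of_pos hs t
  have hsum : x / (x + y) + y / (x + y) = 1 := by field_simp
  calc x ^ t + y ^ t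
      = ((x / (x + y)) ^ t + (y / (x + y)) ^ t) * (x + y) ^ t := by
        rw [add_mul, ← Real.mul_rpow (div_nonneg hx.le hs.le) hs.le,
          ← Real.mul_rpow (div_nonneg hy.le hs.le) hs.le,
          div_mul_cancel₀ _ hs.ne', div_mul_cancel₀ _ hs.ne']
    _ < (x / (x + y) + y / (x + y)) * (x + y) ^ t := by
        apply mul_lt_mul_of_pos_right _ hst
        linarith
    _ = (x + y) ^ t := by rw [hsum, one_mul]

lemma sq_norm_rpow (p : ℝ) (z : ℂ) : (‖z‖ ^ 2) ^ (p / 2) = ‖z‖ ^ p := by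
  rw [← Real.rpow_natCast ‖z‖ 2, ← Real.rpow_mul (norm_nonneg z)]
  congr 1
  push_cast
  ring

lemma par (a b : ℂ) : ‖a + b‖ ^ 2 + ‖a - b‖ ^ 2 = 2 * (‖a‖ ^ 2 + ‖b‖ ^ 2) := by
  have h := parallelogram_law_with_norm ℂ a b
  rw [pow_two, pow_two, pow_two, pow_two]
  linarith

lemma key_eq {p : ℝ} (hp : 0 < p) {a b : ℂ} (h : a = 0 ∨ b = 0) :
    ‖a + b‖ ^ p + ‖a - b‖ ^ p = 2 * (‖a‖ ^ p + ‖b‖ ^ p) := by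
  rcases h with rfl | rfl
  · simp [Real.zero_rpow hp.ne']; ring
  · simp [Real.zero_rpow hp.ne']; ring

lemma key_lt {p : ℝ} (hp0 : 0 < p) (hp2 : p < 2) {a b : ℂ} (ha : a ≠ 0) (hb : b ≠ 0) :
    ‖a + b‖ ^ p + ‖a - b‖ ^ p < 2 * (‖a‖ ^ p + ‖b‖ ^ p) := by
  set t := p / 2 with htdef
  have ht0 : 0 < t := by positivity
  have ht1 : t < 1 := by rw [htdef]; linarith
  have hu : (‖a + b‖ ^ 2 : ℝ) ∈ Set.Ici (0:ℝ) := Set.mem_Ici.mpr (by positivity)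
  have hv : (‖a - b‖ ^ 2 : ℝ) ∈ Set.Ici (0:ℝ) := Set.mem_Ici.mpr (by positivity)
  have hcon := (Real.concaveOn_rpow ht0.le ht1.le).2 hu hv
    (by norm_num : (0:ℝ) ≤ 1/2) (by norm_num : (0:ℝ) ≤ 1/2) (by norm_num)
  simp only [smul_eq_mul] at hcon
  have hmid : (1/2 : ℝ) * (‖a + b‖ ^ 2) + (1/2) * (‖a - b‖ ^ 2) = ‖a‖ ^ 2 + ‖b‖ ^ 2 := by
    have := par a b; linarith
  rw [hmid] at hcon
  have ha2 : (0:ℝ) < ‖a‖ ^ 2 := pow_pos (norm_pos_iff.mpr ha) 2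
  have hb2 : (0:ℝ) < ‖b‖ ^ 2 := pow_pos (norm_pos_iff.mpr hb) 2
  have hstrict := rpow_strict_sub ht0 ht1 ha2 hb2
  rw [← sq_norm_rpow p (a+b), ← sq_norm_rpow p (a-b), ← sq_norm_rpow p a, ← sq_norm_rpow p b]
  show (‖a + b‖ ^ 2) ^ t + (‖a - b‖ ^ 2) ^ t < 2 * ((‖a‖ ^ 2) ^ t + (‖b‖ ^ 2) ^ t)
  linarith

lemma key_gt {p : ℝ} (hp2 : 2 < p) {a b : ℂ} (ha : a ≠ 0) (hb : b ≠ 0) :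
    2 * (‖a‖ ^ p + ‖b‖ ^ p) < ‖a + b‖ ^ p + ‖a - b‖ ^ p := by
  set t := p / 2 with htdef
  have ht1 : 1 < t := by rw [htdef]; linarith
  have hu : (‖a + b‖ ^ 2 : ℝ) ∈ Set.Ici (0:ℝ) := Set.mem_Ici.mpr (by positivity)
  have hv : (‖a - b‖ ^ 2 : ℝ) ∈ Set.Ici (0:ℝ) := Set.mem_Ici.mpr (by positivity)
  have hcon := (convexOn_rpow ht1.le).2 hu hv
    (by norm_num : (0:ℝ) ≤ 1/2) (by norm_num : (0:ℝ) ≤ 1/2) (by norm_num)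
  simp only [smul_eq_mul] at hcon
  have hmid : (1/2 : ℝ) * (‖a + b‖ ^ 2) + (1/2) * (‖a - b‖ ^ 2) = ‖a‖ ^ 2 + ‖b‖ ^ 2 := by
    have := par a b; linarith
  rw [hmid] at hcon
  have ha2 : (0:ℝ) < ‖a‖ ^ 2 := pow_pos (norm_pos_iff.mpr ha) 2
  have hb2 : (0:ℝ) < ‖b‖ ^ 2 := pow_pos (norm_pos_iff.mpr hb) 2
  have hstrict := rpow_strict_super ht1 ha2 hb2
  rw [← sq_norm_rpow p (a+b), ← sq_norm_rpow p (a-b), ← sq_norm_rpow p a, ← sq_norm_rpow p b]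
  show 2 * ((‖a‖ ^ 2) ^ t + (‖b‖ ^ 2) ^ t) < (‖a + b‖ ^ 2) ^ t + (‖a - b‖ ^ 2) ^ t
  linarith

variable {X : Type*} {p : ℝ}

lemma norm_rpow (hp1 : 1 ≤ p) [Fact (1 ≤ ENNReal.ofReal p)]
    (f : lp (fun _ : X => ℂ) (ENNReal.ofReal p)) :
    ‖f‖ ^ p = ∑' x, ‖f x‖ ^ p := by
  have hq : (ENNReal.ofReal p).toReal = p := ENNReal.toReal_ofReal (by linarith)
  have h := lp.norm_rpow_eq_tsum (p := ENNReal.ofReal p) (by rw [hq]; linarith) f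
  rwa [hq] at h

lemma summable_norm (hp1 : 1 ≤ p) [Fact (1 ≤ ENNReal.ofReal p)]
    (f : lp (fun _ : X => ℂ) (ENNReal.ofReal p)) :
    Summable fun x => ‖f x‖ ^ p := by
  have hq : (ENNReal.ofReal p).toReal = p := ENNReal.toReal_ofReal (by linarith)
  have h := (lp.memℓp f).summable (p := ENNReal.ofReal p) (by rw [hq]; linarith)
  rwa [hq] at h

lemma disjoint_iff (hp1 : 1 ≤ p) (hp2 : p ≠ 2) [Fact (1 ≤ ENNReal.ofReal p)]
    (f g : lp (fun _ : X => ℂ) (ENNReal.ofReal p)) :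
    (∀ x, f x = 0 ∨ g x = 0) ↔
      ‖f + g‖ ^ p + ‖f - g‖ ^ p = 2 * (‖f‖ ^ p + ‖g‖ ^ p) := by
  have hp0 : 0 < p := lt_of_lt_of_le zero_lt_one hp1
  have hs1 : Summable fun x => ‖f x + g x‖ ^ p := by
    have := summable_norm hp1 (f + g)
    simpa only [lp.coeFn_add, Pi.add_apply] using this
  have hs2 : Summable fun x => ‖f x - g x‖ ^ p := by
    have := summable_norm hp1 (f - g)
    simpa only [lp.coeFn_sub, Pi.sub_apply] using this
  have hsf := summable_norm hp1 f
  have hsg := summable_norm hp1 g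
  have hL : ‖f + g‖ ^ p + ‖f - g‖ ^ p = ∑' x, (‖f x + g x‖ ^ p + ‖f x - g x‖ ^ p) := by
    rw [norm_rpow hp1 (f + g), norm_rpow hp1 (f - g)]
    simp only [lp.coeFn_add, Pi.add_apply, lp.coeFn_sub, Pi.sub_apply]
    rw [← Summable.tsum_add hs1 hs2]
  have hR : 2 * (‖f‖ ^ p + ‖g‖ ^ p) = ∑' x, 2 * (‖f x‖ ^ p + ‖g x‖ ^ p) := by
    rw [norm_rpow hp1 f, norm_rpow hp1 g, ← Summable.tsum_add hsf hsg, ← tsum_mul_left]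
  constructor
  · intro h
    rw [hL, hR]
    exact tsum_congr fun x => key_eq hp0 (h x)
  · intro h
    by_contra hc
    push_neg at hc
    obtain ⟨x0, hx0⟩ := hc
    rw [hL, hR] at h
    rcases lt_or_gt_of_ne hp2 with hlt | hgt
    · have : (∑' x, (‖f x + g x‖ ^ p + ‖f x - g x‖ ^ p)) <
          ∑' x, 2 * (‖f x‖ ^ p + ‖g x‖ ^ p) := by
        refine Summable.tsum_lt_tsum (i := x0) (fun x => ?_) (key_lt hp0 hlt hx0.1 hx0.2)
          (hs1.add hs2) ((hsf.add hsg).mul_left 2)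
        by_cases h' : f x = 0 ∨ g x = 0
        · exact (key_eq hp0 h').le
        · rw [not_or] at h'
          exact (key_lt hp0 hlt h'.1 h'.2).le
      exact absurd h this.ne
    · have : (∑' x, 2 * (‖f x‖ ^ p + ‖g x‖ ^ p)) <
          ∑' x, (‖f x + g x‖ ^ p + ‖f x - g x‖ ^ p) := by
        refine Summable.tsum_lt_tsum (i := x0) (fun x => ?_) (key_gt hgt hx0.1 hx0.2)
          ((hsf.add hsg).mul_left 2) (hs1.add hs2)
        by_cases h' : f x = 0 ∨ g x = 0
        · exact (key_eq hp0 h').ge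
        · rw [not_or] at h'
          exact (key_gt hgt h'.1 h'.2).le
      exact absurd h this.ne'
    
lemma preserve_disjoint (hp1 : 1 ≤ p) (hp2 : p ≠ 2) [Fact (1 ≤ ENNReal.ofReal p)]
    (V : lp (fun _ : X => ℂ) (ENNReal.ofReal p) ≃ₗᵢ[ℂ] lp (fun _ : X => ℂ) (ENNReal.ofReal p))
    (f g : lp (fun _ : X => ℂ) (ENNReal.ofReal p))
    (h : ∀ x, f x = 0 ∨ g x = 0) : ∀ x, (V f) x = 0 ∨ (V g) x = 0 := by
  rw [disjoint_iff hp1 hp2] at h ⊢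
  rw [← map_add, ← map_sub, V.norm_map, V.norm_map, V.norm_map, V.norm_map]
  exact h

/-- Evaluation at a point as a continuous linear map. -/
def evalCLM [Fact (1 ≤ ENNReal.ofReal p)] (a : X) :
    lp (fun _ : X => ℂ) (ENNReal.ofReal p) →L[ℂ] ℂ :=
  LinearMap.mkContinuous
    { toFun := fun f => f a
      map_add' := fun f g => by
        show ((f + g : lp _ _) : ∀ _, ℂ) a = _
        rw [lp.coeFn_add]; rfl
      map_smul' := fun c f => by
        show ((c • f : lp _ _) : ∀ _, ℂ) a = _
        rw [lp.coeFn_smul]; rfl }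
    1 (fun f => by
      simp only [LinearMap.coe_mk, AddHom.coe_mk, one_mul]
      exact lp.norm_apply_le_norm
        (zero_lt_one.trans_le (Fact.out : 1 ≤ ENNReal.ofReal p)).ne' f a)

@[simp] lemma evalCLM_apply [Fact (1 ≤ ENNReal.ofReal p)] (a : X)
    (f : lp (fun _ : X => ℂ) (ENNReal.ofReal p)) : evalCLM a f = f a := rfl

lemma hasSum_expansion (hp1 : 1 ≤ p) [Fact (1 ≤ ENNReal.ofReal p)] [DecidableEq X]
    (V : lp (fun _ : X => ℂ) (ENNReal.ofReal p) ≃ₗᵢ[ℂ] lp (fun _ : X => ℂ) (ENNReal.ofReal p))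
    (f : lp (fun _ : X => ℂ) (ENNReal.ofReal p)) (a : X) :
    HasSum (fun x => f x * (V (lp.single (ENNReal.ofReal p) x 1)) a) ((V f) a) := by
  have h0 := lp.hasSum_single (E := fun _ : X => ℂ) ENNReal.ofReal_ne_top f
  set T : lp (fun _ : X => ℂ) (ENNReal.ofReal p) →L[ℂ] ℂ :=
    (evalCLM a).comp V.toLinearIsometry.toContinuousLinearMap with hT
  have h1 : HasSum (fun x => T (lp.single (ENNReal.ofReal p) x (f x))) (T f) :=
    T.hasSum h0
  have h2 : ∀ x : X, T (lp.single (ENNReal.ofReal p) x (f x)) =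
      f x * (V (lp.single (ENNReal.ofReal p) x 1)) a := by
    intro x
    have hsingle : lp.single (E := fun _ : X => ℂ) (ENNReal.ofReal p) x (f x) =
        f x • lp.single (E := fun _ : X => ℂ) (ENNReal.ofReal p) x (1 : ℂ) := by
      rw [← lp.single_smul, smul_eq_mul, mul_one]
    rw [hsingle, T.map_smul]
    simp only [hT, ContinuousLinearMap.comp_apply, evalCLM_apply, smul_eq_mul]
    rfl
  have h3 : T f = (V f) a := rfl
  simp only [h2] at h1
  exact h3 ▸ h1

end BanachLampertiAux

open BanachLampertiAux in
/-- (Banach) For `p ≠ 2`, every surjective linear isometry `U` of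
`ℓ_p(X)` is of the form `(U f)(x) = h(x) f(σ(x))` for a unique permutation `σ` of `X`
and a unique function `h : X → S¹`. -/
theorem surjective_isometry_lp_eq_twisted_permutation
    (X : Type*) [Countable X] (p : ℝ) (hp1 : 1 ≤ p) (hp2 : p ≠ 2)
    [Fact (1 ≤ ENNReal.ofReal p)]
    (U : lp (fun _ : X => ℂ) (ENNReal.ofReal p) ≃ₗᵢ[ℂ]
      lp (fun _ : X => ℂ) (ENNReal.ofReal p)) :
    ∃! σh : Equiv.Perm X × (X → ℂ),
      (∀ x : X, ‖σh.2 x‖ = 1) ∧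
      ∀ (f : lp (fun _ : X => ℂ) (ENNReal.ofReal p)) (x : X),
        (U f) x = σh.2 x * f (σh.1 x) := by
  classical
  set P := ENNReal.ofReal p with hPdef
  have hq : P.toReal = p := ENNReal.toReal_ofReal (by linarith)
  have hp' : 0 < P.toReal := by rw [hq]; linarith
  set e : X → lp (fun _ : X => ℂ) P :=
    fun x => lp.single (E := fun _ : X => ℂ) P x (1 : ℂ) with hedef
  have he_self : ∀ x, (e x) x = 1 := fun x => lp.single_apply_self P x 1
  have he_ne : ∀ x b, b ≠ x → (e x) b = 0 := fun x b hb => lp.single_apply_ne P x 1 hb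
  have hnorm_e : ∀ x, ‖e x‖ = 1 := by
    intro x
    have := lp.norm_single (E := fun _ : X => ℂ) (p := P) (zero_lt_one.trans_le (Fact.out : 1 ≤ P)) x (1 : ℂ)
    simpa using this
  have hdis : ∀ x y, x ≠ y → ∀ a, (U (e x)) a = 0 ∨ (U (e y)) a = 0 := by
    intro x y hxy
    refine preserve_disjoint hp1 hp2 U _ _ ?_
    intro a
    by_cases hax : a = x
    · subst hax
      exact Or.inr (he_ne y a hxy)
    · exact Or.inl (he_ne x a hax)
  have hexp : ∀ (f : lp (fun _ : X => ℂ) P) (a : X),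
      HasSum (fun x => f x * (U (e x)) a) ((U f) a) :=
    fun f a => hasSum_expansion hp1 U f a
  have hex : ∀ x, ∃ a, (U (e x)) a ≠ 0 := by
    intro x
    by_contra hc
    push_neg at hc
    have h0 : U (e x) = 0 := by
      apply lp.ext
      funext a
      simp [hc a]
    have h1 : e x = 0 := by
      have := congrArg U.symm h0
      simpa using this
    have h2 := he_self x
    rw [h1] at h2
    simp at h2
  have hval : ∀ (g : lp (fun _ : X => ℂ) P) (x a : X), (U (e x)) a ≠ 0 →
      (U g) a = g x * (U (e x)) a := by
    intro g x a ha
    refine (hexp g a).unique (_root_.hasSum_single x ?_)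
    intro y hy
    rcases hdis y x hy a with h | h
    · rw [h, mul_zero]
    · exact absurd h ha
  have huniq : ∀ x a b, (U (e x)) a ≠ 0 → (U (e x)) b ≠ 0 → a = b := by
    intro x a b ha hb
    by_contra hab
    have hga : (U (U.symm (e a))) a = (U.symm (e a)) x * (U (e x)) a := hval _ x a ha
    have hgb : (U (U.symm (e b))) b = (U.symm (e b)) x * (U (e x)) b := hval _ x b hb
    rw [U.apply_symm_apply, he_self a] at hga
    rw [U.apply_symm_apply, he_self b] at hgb
    have hax : (U.symm (e a)) x ≠ 0 := fun h => by
      rw [h, zero_mul] at hga; exact one_ne_zero hga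
    have hbx : (U.symm (e b)) x ≠ 0 := fun h => by
      rw [h, zero_mul] at hgb; exact one_ne_zero hgb
    have hdisj : ∀ y, (U.symm (e a)) y = 0 ∨ (U.symm (e b)) y = 0 := by
      refine preserve_disjoint hp1 hp2 U.symm _ _ ?_
      intro y
      by_cases hya : y = a
      · subst hya
        exact Or.inr (he_ne b y hab)
      · exact Or.inl (he_ne a y hya)
    rcases hdisj x with h | h
    · exact hax h
    · exact hbx h
  have hsurj : ∀ a, ∃ x, (U (e x)) a ≠ 0 := by
    intro a
    by_contra hc
    push_neg at hc
    have h1 : (U (U.symm (e a))) a = 1 := by rw [U.apply_symm_apply]; exact he_self a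
    have h0 := hexp (U.symm (e a)) a
    have h2 : (U (U.symm (e a))) a = 0 := h0.unique (by simpa [hc] using hasSum_zero)
    rw [h1] at h2
    exact one_ne_zero h2
  choose τ hτ using hex
  have hτinj : Function.Injective τ := by
    intro x y hxy
    by_contra hne
    rcases hdis x y hne (τ x) with h | h
    · exact hτ x h
    · exact hτ y (hxy ▸ h)
  have hτsurj : Function.Surjective τ := by
    intro a
    obtain ⟨x, hx⟩ := hsurj a
    exact ⟨x, huniq x (τ x) a (hτ x) hx⟩
  set τe : Equiv.Perm X := Equiv.ofBijective τ ⟨hτinj, hτsurj⟩ with hτedef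
  set σ : Equiv.Perm X := τe.symm with hσdef
  set hfun : X → ℂ := fun a => (U (e (σ a))) a with hfundef
  have hτσ : ∀ a, τ (σ a) = a := fun a => τe.apply_symm_apply a
  have hsupp : ∀ x b, b ≠ τ x → (U (e x)) b = 0 := by
    intro x b hb
    by_contra h
    exact hb (huniq x b (τ x) h (hτ x))
  have hnorm_val : ∀ x, ‖(U (e x)) (τ x)‖ = 1 := by
    intro x
    have hrep : U (e x) = lp.single (E := fun _ : X => ℂ) P (τ x) ((U (e x)) (τ x)) := by
      apply lp.ext
      funext b
      by_cases hb : b = τ x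
      · subst hb
        rw [lp.single_apply_self]
      · rw [lp.single_apply_ne P (τ x) _ hb, hsupp x b hb]
    have h1 : ‖U (e x)‖ = 1 := by rw [U.norm_map]; exact hnorm_e x
    rw [hrep] at h1
    have h2 := lp.norm_single (E := fun _ : X => ℂ) (p := P) (zero_lt_one.trans_le (Fact.out : 1 ≤ P)) (τ x) ((U (e x)) (τ x))
    rwa [h2] at h1
  have hnormh : ∀ a, ‖hfun a‖ = 1 := by
    intro a
    have := hnorm_val (σ a)
    rwa [hτσ a] at this
  have hmain : ∀ (f : lp (fun _ : X => ℂ) P) (a : X), (U f) a = hfun a * f (σ a) := by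
    intro f a
    have hne : (U (e (σ a))) a ≠ 0 := by
      have := hτ (σ a)
      rwa [hτσ a] at this
    rw [hval f (σ a) a hne, mul_comm]
  refine ⟨⟨σ, hfun⟩, ⟨fun a => hnormh a, fun f a => hmain f a⟩, ?_⟩
  rintro ⟨σ', h'⟩ ⟨hn', hm'⟩
  have hσ : ∀ a, σ' a = σ a := by
    intro a
    by_contra hne
    have h1 := hm' (e (σ a)) a
    have h2 := hmain (e (σ a)) a
    rw [he_ne (σ a) (σ' a) hne, mul_zero] at h1
    rw [he_self (σ a), mul_one] at h2
    have h3 : hfun a ≠ 0 := by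
      intro h0
      have := hnormh a
      rw [h0, norm_zero] at this
      norm_num at this
    rw [h1] at h2
    exact h3 h2.symm
  have hh : ∀ a, h' a = hfun a := by
    intro a
    have h1 := hm' (e (σ a)) a
    rw [hσ a, he_self (σ a), mul_one] at h1
    have h2 := hmain (e (σ a)) a
    rw [he_self (σ a), mul_one] at h2
    exact h1.symm.trans h2
  exact Prod.ext (Equiv.ext hσ) (funext hh)

end
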